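/- Let N, M ≥ 1, let Ξ, Λ ∈ M_N(ℂ) be constant matrices with no common eigenvalue, let E ∈ M_M(ℂ) be a constant matrix, and let η: ℝ → ℂ^{N×M}, θ: ℝ → ℂ^{M×N}, Ω: ℝ → M_N(ℂ) be differentiable functions of a real variable t₀ such that at every t₀: Ξ·Ω − Ω·Λ = η·θ; ∂₀η = η·E; and ∂₀θ = −E·θ. Then: (a) ∂₀Ω = 0, i.e. Ω is constant; and (b) if in addition Ω is pointwise invertible, then K := θ·Ω⁻¹·η satisfies the dimensional reduction constraint ∂₀K = K·E − E·K = [K, E]. -/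

import Mathlib

noncomputable section

/-- Entrywise derivative of a matrix-valued function of one real variable `t₀`. -/
def dM {a b : Type*} (f : ℝ → Matrix a b ℂ) (t : ℝ) : Matrix a b ℂ :=
  Matrix.of fun i j => deriv (fun s => f s i j) t

open Polynomial Matrix

lemma dM_mul {a b c : Type*} [Fintype b] (f : ℝ → Matrix a b ℂ) (g : ℝ → Matrix b c ℂ)
    (hf : ∀ i j, Differentiable ℝ fun t => f t i j)
    (hg : ∀ i j, Differentiable ℝ fun t => g t i j) (t : ℝ) :
    dM (fun s => f s * g s) t = dM f t * g t + f t * dM g t := by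
  ext i j
  simp only [dM, Matrix.of_apply, Matrix.mul_apply, Matrix.add_apply]
  rw [deriv_fun_sum (A := fun k s => f s i k * g s k j) (fun k _ => ((hf i k t).mul (hg k j t)))]
  rw [← Finset.sum_add_distrib]
  refine Finset.sum_congr rfl fun k _ => ?_
  rw [deriv_fun_mul (hf i k t) (hg k j t)]

lemma dM_sub {a b : Type*} (f g : ℝ → Matrix a b ℂ)
    (hf : ∀ i j, Differentiable ℝ fun t => f t i j)
    (hg : ∀ i j, Differentiable ℝ fun t => g t i j) (t : ℝ) :
    dM (fun s => f s - g s) t = dM f t - dM g t := by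
  ext i j
  simp only [dM, Matrix.of_apply, Matrix.sub_apply]
  exact deriv_sub (hf i j t) (hg i j t)

lemma dM_const {a b : Type*} (A : Matrix a b ℂ) (t : ℝ) : dM (fun _ => A) t = 0 := by
  ext i j; simp [dM]

lemma charpoly_eval {n : ℕ} (A : Matrix (Fin n) (Fin n) ℂ) (μ : ℂ) :
    A.charpoly.eval μ = (algebraMap ℂ (Matrix (Fin n) (Fin n) ℂ) μ - A).det := by
  rw [Matrix.charpoly, eval_det, matPolyEquiv_charmatrix]
  congr 1
  simp only [eval_sub, eval_X, eval_C]
  have : (Matrix.scalar (Fin n)) μ = algebraMap ℂ (Matrix (Fin n) (Fin n) ℂ) μ := by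
    ext i j
    by_cases hij : i = j <;>
      simp [Matrix.scalar_apply, Matrix.algebraMap_matrix_apply, Matrix.diagonal_apply, hij]
  rw [this]

lemma root_mem_spectrum {n : ℕ} (A : Matrix (Fin n) (Fin n) ℂ) (μ : ℂ)
    (h : μ ∈ A.charpoly.roots) : μ ∈ spectrum ℂ A := by
  rw [Polynomial.mem_roots A.charpoly_monic.ne_zero] at h
  rw [spectrum.mem_iff]
  intro hu
  rw [Matrix.isUnit_iff_isUnit_det] at hu
  have : (algebraMap ℂ (Matrix (Fin n) (Fin n) ℂ) μ - A).det = 0 := by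
    rw [← charpoly_eval]; exact h
  rw [this] at hu
  exact hu.ne_zero rfl

lemma isUnit_aeval_prod_linear {n : ℕ} (Ξ : Matrix (Fin n) (Fin n) ℂ) (s : Multiset ℂ)
    (hs : ∀ a ∈ s, a ∉ spectrum ℂ Ξ) :
    IsUnit (Polynomial.aeval Ξ (s.map fun a => X - C a).prod) := by
  induction s using Multiset.induction_on with
  | empty => simp
  | cons a s ih =>
    rw [Multiset.map_cons, Multiset.prod_cons, _root_.map_mul]
    refine IsUnit.mul ?_ (ih fun b hb => hs b (Multiset.mem_cons_of_mem hb))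
    have haΞ := hs a (Multiset.mem_cons_self a s)
    rw [spectrum.notMem_iff] at haΞ
    have : Polynomial.aeval Ξ (X - C a) = -(algebraMap ℂ _ a - Ξ) := by
      simp [neg_sub]
    rw [this]
    exact haΞ.neg

/-- Sylvester uniqueness: if `Ξ` and `Λ` have disjoint spectra and `Ξ A = A Λ` then `A = 0`. -/
lemma sylvester_eq_zero {n : ℕ} (Ξ Λ A : Matrix (Fin n) (Fin n) ℂ)
    (hΞΛ : spectrum ℂ Ξ ∩ spectrum ℂ Λ = ∅) (h : Ξ * A = A * Λ) : A = 0 := by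
  have hpow : ∀ k : ℕ, Ξ ^ k * A = A * Λ ^ k := by
    intro k
    induction k with
    | zero => simp
    | succ k ih =>
      rw [pow_succ', mul_assoc, ih, ← mul_assoc, h, mul_assoc, ← pow_succ']
  have hpoly : ∀ p : ℂ[X], aeval Ξ p * A = A * aeval Λ p := by
    intro p
    induction p using Polynomial.induction_on' with
    | add p q hp hq => simp [map_add, add_mul, mul_add, hp, hq]
    | monomial k a =>
      simp only [aeval_monomial]
      rw [mul_assoc, hpow k, ← mul_assoc, Algebra.commutes a A, mul_assoc]
  have hkill : aeval Ξ Λ.charpoly * A = 0 := by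
    rw [hpoly, Matrix.aeval_self_charpoly, mul_zero]
  have hsplit : Λ.charpoly = (Λ.charpoly.roots.map fun a => X - C a).prod :=
    ((IsAlgClosed.splits Λ.charpoly).eq_prod_roots_of_monic
      Λ.charpoly_monic)
  have hunit : IsUnit (aeval Ξ Λ.charpoly) := by
    rw [hsplit]
    refine isUnit_aeval_prod_linear Ξ _ fun a ha hmem => ?_
    have : a ∈ spectrum ℂ Ξ ∩ spectrum ℂ Λ := ⟨hmem, root_mem_spectrum Λ a ha⟩
    rw [hΞΛ] at this
    exact this
  obtain ⟨u, hu⟩ := hunit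
  calc A = (↑u⁻¹ * ↑u : Matrix (Fin n) (Fin n) ℂ) * A := by rw [Units.inv_mul, one_mul]
    _ = ↑u⁻¹ * (aeval Ξ Λ.charpoly * A) := by rw [mul_assoc, hu]
    _ = 0 := by rw [hkill, mul_zero]

/-- **Realization of the dimensional reduction constraint for Gram-type solutions.**
If `ΞΩ − ΩΛ = ηθ` with `Ξ, Λ` sharing no eigenvalue, and `∂₀η = ηE`, `∂₀θ = −Eθ`, then
(a) `∂₀Ω = 0`; and (b) if `Ω` is pointwise invertible, `K = θΩ⁻¹η` satisfies
`∂₀K = KE − EK = [K, E]`. -/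
theorem gram_dimensional_reduction (N M : ℕ) (hN : 1 ≤ N) (hM : 1 ≤ M)
    (Ξ Λ : Matrix (Fin N) (Fin N) ℂ)
    (hΞΛ : spectrum ℂ Ξ ∩ spectrum ℂ Λ = ∅)
    (E : Matrix (Fin M) (Fin M) ℂ)
    (η : ℝ → Matrix (Fin N) (Fin M) ℂ)
    (θ : ℝ → Matrix (Fin M) (Fin N) ℂ)
    (Ω : ℝ → Matrix (Fin N) (Fin N) ℂ)
    (hηd : ∀ i j, Differentiable ℝ fun t => η t i j)
    (hθd : ∀ i j, Differentiable ℝ fun t => θ t i j)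
    (hΩd : ∀ i j, Differentiable ℝ fun t => Ω t i j)
    (hSyl : ∀ t, Ξ * Ω t - Ω t * Λ = η t * θ t)
    (hη : ∀ t, dM η t = η t * E)
    (hθ : ∀ t, dM θ t = -(E * θ t)) :
    (∀ t, dM Ω t = 0) ∧
    ((∀ t, IsUnit (Ω t)) →
      ∀ t, dM (fun s => θ s * (Ω s)⁻¹ * η s) t =
        (θ t * (Ω t)⁻¹ * η t) * E - E * (θ t * (Ω t)⁻¹ * η t)) := by
  have hΞΩd : ∀ i j, Differentiable ℝ fun t => (Ξ * Ω t) i j := by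
    intro i j
    simp only [Matrix.mul_apply]
    exact Differentiable.fun_sum fun k _ => (differentiable_const (Ξ i k)).mul (hΩd k j)
  have hΩΛd : ∀ i j, Differentiable ℝ fun t => (Ω t * Λ) i j := by
    intro i j
    simp only [Matrix.mul_apply]
    exact Differentiable.fun_sum fun k _ => (hΩd i k).mul (differentiable_const (Λ k j))
  have key : ∀ t, dM Ω t = 0 := by
    intro t
    have hfun : (fun s => (Ξ * Ω s : Matrix (Fin N) (Fin N) ℂ) - Ω s * Λ)
        = fun s => η s * θ s := funext hSyl
    have hL : dM (fun s => (Ξ * Ω s : Matrix (Fin N) (Fin N) ℂ) - Ω s * Λ) t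
        = Ξ * dM Ω t - dM Ω t * Λ := by
      rw [dM_sub _ _ hΞΩd hΩΛd,
        dM_mul (fun _ => Ξ) Ω (fun _ _ => differentiable_const _) hΩd,
        dM_mul Ω (fun _ => Λ) hΩd (fun _ _ => differentiable_const _),
        dM_const, dM_const]
      simp
    have hR : dM (fun s => η s * θ s) t = 0 := by
      rw [dM_mul η θ hηd hθd, hη, hθ, Matrix.mul_neg, Matrix.mul_assoc, add_neg_cancel]
    have h0 : Ξ * dM Ω t - dM Ω t * Λ = 0 := by rw [← hL, hfun, hR]
    exact sylvester_eq_zero Ξ Λ (dM Ω t) hΞΛ (by rwa [sub_eq_zero] at h0)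
  refine ⟨key, fun hinv t => ?_⟩
  have hconst : ∀ s, Ω s = Ω 0 := by
    intro s
    ext i j
    refine is_const_of_deriv_eq_zero (hΩd i j) (fun x => ?_) s 0
    have h := key x
    have := congrFun (congrFun (congrArg (fun (m : Matrix (Fin N) (Fin N) ℂ) i j => m i j) h) i) j
    simpa [dM] using this
  set C := (Ω 0)⁻¹ with hC
  have hfun : (fun s => θ s * (Ω s)⁻¹ * η s) = fun s => θ s * C * η s := by
    funext s; rw [hconst s]
  rw [hfun]
  have hθCd : ∀ i j, Differentiable ℝ fun t => (θ t * C) i j := by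
    intro i j
    simp only [Matrix.mul_apply]
    exact Differentiable.fun_sum fun k _ => (hθd i k).mul (differentiable_const (C k j))
  rw [dM_mul (fun s => θ s * C) η hθCd hηd t,
    dM_mul θ (fun _ => C) hθd (fun _ _ => differentiable_const _) t, dM_const, hθ, hη]
  rw [hconst t, ← hC]
  simp only [Matrix.mul_zero, add_zero, Matrix.neg_mul, Matrix.mul_neg, Matrix.mul_assoc,
    sub_eq_add_neg]
  abel

end
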